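/- For H ∈ (0,1) and T > 0, the variance of the fractional Ornstein–Uhlenbeck process, given by the integral T² [Γ(H+1/2)]² ∫_ℝ |2πω|^{1−2H} / (1+4π²ω²T²) dω, equals T^{2H} [Γ(H+1/2)]² / (2 sin(πH)). -/

import Mathlib

open MeasureTheory Real

section Aux
open Set

private lemma rbeta' {a : ℝ} (ha : a ∈ Set.Ioo (0:ℝ) 1) :
    ∫ x in (0:ℝ)..1, x ^ (a-1) * (1-x) ^ (-a) = π / Real.sin (π * a) := by
  obtain ⟨ha0, ha1⟩ := ha
  have hb : Complex.betaIntegral a (1 - a) = ↑(π / Real.sin (π * a)) := by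
    have h1 := Complex.Gamma_mul_Gamma_eq_betaIntegral (s := (a:ℂ)) (t := (1 - a : ℝ))
      (by simpa using ha0) (by simp; linarith)
    have h2 := Complex.Gamma_mul_Gamma_one_sub (a : ℂ)
    push_cast at h1 ⊢
    rw [h2] at h1
    have : Complex.Gamma (↑a + (1 - ↑a)) = 1 := by norm_num [Complex.Gamma_one]
    rw [this, one_mul] at h1
    rw [← h1]
  have heq : Complex.betaIntegral a (1 - a)
      = ↑(∫ x in (0:ℝ)..1, x ^ (a-1) * (1-x) ^ (-a)) := by
    rw [Complex.betaIntegral, ← intervalIntegral.integral_ofReal]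
    refine intervalIntegral.integral_congr fun x hx => ?_
    rw [Set.uIcc_of_le (by norm_num)] at hx
    push_cast
    rw [Complex.ofReal_cpow hx.1, Complex.ofReal_cpow (by linarith [hx.2])]
    push_cast
    ring_nf
  rw [heq] at hb
  exact_mod_cast hb

private lemma cov_beta {a : ℝ} (ha : a ∈ Set.Ioo (0:ℝ) 1) :
    ∫ t in Ioi (0:ℝ), t ^ (a-1) / (1+t) = ∫ x in (0:ℝ)..1, x ^ (a-1) * (1-x) ^ (-a) := by
  obtain ⟨ha0, ha1⟩ := ha
  set f : ℝ → ℝ := fun x => x / (1 - x) with hf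
  have himg : f '' Ioo 0 1 = Ioi (0:ℝ) := by
    ext t
    constructor
    · rintro ⟨x, ⟨hx0, hx1⟩, rfl⟩
      exact div_pos hx0 (by linarith)
    · intro ht
      have ht' : (0:ℝ) < t := ht
      have h1t : (1:ℝ) + t ≠ 0 := by positivity
      refine ⟨t / (1 + t), ⟨div_pos ht' (by linarith), ?_⟩, ?_⟩
      · rw [div_lt_one (by linarith)]; linarith
      · simp only [hf]
        have h2 : (1:ℝ) - t/(1+t) = 1/(1+t) := by field_simp; ring
        rw [h2]
        field_simp
  have hderiv : ∀ x ∈ Ioo (0:ℝ) 1, HasDerivWithinAt f (((1-x)^2)⁻¹) (Ioo 0 1) x := by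
    intro x hx
    have h1x : (1:ℝ) - x ≠ 0 := by simp only [mem_Ioo] at hx; intro h; linarith [hx.2]
    have := (hasDerivAt_id x).div ((hasDerivAt_id x).const_sub 1) h1x
    have e : ((1-x)^2)⁻¹ = (1 * (1 - id x) - id x * -1) / (1 - id x) ^ 2 := by
      simp only [id]; field_simp; ring
    rw [e]; exact this.hasDerivWithinAt
  have hinj : InjOn f (Ioo 0 1) := by
    intro x hx y hy hxy
    simp only [mem_Ioo] at hx hy
    have h1x : (1:ℝ) - x ≠ 0 := by intro h; linarith [hx.2]
    have h1y : (1:ℝ) - y ≠ 0 := by intro h; linarith [hy.2]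
    simp only [hf] at hxy
    field_simp at hxy
    linarith
  have key := integral_image_eq_integral_abs_deriv_smul measurableSet_Ioo hderiv hinj
    (fun t => t ^ (a-1) / (1+t))
  rw [himg] at key
  rw [key, intervalIntegral.integral_of_le (by norm_num), integral_Ioc_eq_integral_Ioo]
  refine setIntegral_congr_fun measurableSet_Ioo fun x hx => ?_
  obtain ⟨hx0, hx1⟩ := hx
  have hu : (0:ℝ) < 1 - x := by linarith
  have h1 : (1:ℝ) + x / (1-x) = (1-x)⁻¹ := by field_simp; ring
  simp only [smul_eq_mul, hf, h1]
  rw [abs_of_nonneg (by positivity)]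
  rw [div_rpow hx0.le hu.le, div_eq_mul_inv _ (1-x)⁻¹, inv_inv, rpow_neg hu.le]
  have hsplit : (1-x)^a = (1-x)^(a-1) * (1-x)^(1:ℝ) := by
    rw [← rpow_add hu]; norm_num
  have hne1 : (1-x)^(a-1) ≠ 0 := (rpow_pos_of_pos hu _).ne'
  have hne2 : (1-x)^a ≠ 0 := (rpow_pos_of_pos hu _).ne'
  field_simp
  rw [hsplit, rpow_one]
  ring

private lemma L1 {a : ℝ} (ha : a ∈ Set.Ioo (0:ℝ) 1) :
    ∫ t in Ioi (0:ℝ), t ^ (a-1) / (1+t) = π / Real.sin (π * a) := by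
  rw [cov_beta ha, rbeta' ha]

private lemma L2 {H : ℝ} (hH : H ∈ Set.Ioo (0:ℝ) 1) :
    ∫ x in Ioi (0:ℝ), x ^ (1-2*H) / (1+x^2) = π / (2 * Real.sin (π * H)) := by
  obtain ⟨h0, h1⟩ := hH
  have key := integral_comp_rpow_Ioi_of_pos
    (g := fun t => (1/2 : ℝ) * (t ^ ((1-H)-1) / (1+t))) (p := 2) two_pos
  have congr1 : ∫ x in Ioi (0:ℝ), x ^ (1-2*H) / (1+x^2)
      = ∫ x in Ioi (0:ℝ), ((2:ℝ) * x ^ ((2:ℝ) - 1)) • ((1/2 : ℝ) * ((x^(2:ℝ)) ^ ((1-H)-1) / (1+x^(2:ℝ)))) := by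
    refine setIntegral_congr_fun measurableSet_Ioi fun x hx => ?_
    have hx0 : (0:ℝ) < x := hx
    have e1 : (x:ℝ)^(2:ℝ) = x^2 := by rw [rpow_two]
    have e2 : (x^2 : ℝ) ^ ((1-H)-1) = x ^ (2*((1-H)-1)) := by
      rw [← rpow_natCast x 2, ← rpow_mul hx0.le]; norm_num
    rw [smul_eq_mul, e1, e2]
    have e3 : (x:ℝ) ^ ((2:ℝ)-1) = x := by norm_num
    rw [e3]
    have e4 : x * x ^ (2*((1-H)-1)) = x ^ (1 + 2*((1-H)-1)) := by
      rw [rpow_add hx0, rpow_one]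
    have e5 : (1:ℝ) + 2*((1-H)-1) = 1 - 2*H := by ring
    field_simp
    rw [show (1:ℝ) - 2*H = 1 + -(2*H) by ring, rpow_add hx0, rpow_one]
    ring
  rw [congr1, key]
  simp only [MeasureTheory.integral_const_mul]
  rw [show ∫ t in Ioi (0:ℝ), t ^ ((1-H)-1) / (1+t) = π / Real.sin (π * (1-H)) from
    L1 ⟨by linarith, by linarith⟩]
  rw [show π*(1-H) = π - π*H by ring, Real.sin_pi_sub]
  ring

theorem fOU_variance (H T : ℝ) (hH : H ∈ Set.Ioo (0 : ℝ) 1) (hT : 0 < T) :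
    T^2 * (Real.Gamma (H + 1/2))^2 *
        ∫ ω : ℝ, |2 * Real.pi * ω| ^ (1 - 2*H) / (1 + 4 * Real.pi^2 * ω^2 * T^2) =
      T ^ (2*H) * (Real.Gamma (H + 1/2))^2 / (2 * Real.sin (Real.pi * H)) := by
  obtain ⟨h0, h1⟩ := hH
  have hs : 0 < Real.sin (π * H) :=
    Real.sin_pos_of_pos_of_lt_pi (by positivity) (by nlinarith [Real.pi_pos])
  set g : ℝ → ℝ := fun x => |x/T| ^ (1-2*H) / (1+x^2) with hg
  have step1 : ∫ ω : ℝ, |2 * π * ω| ^ (1 - 2*H) / (1 + 4 * π^2 * ω^2 * T^2)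
      = 2 * ∫ u in Ioi (0:ℝ), g (2*π*T*u) := by
    rw [← integral_comp_abs (f := fun u => g (2*π*T*u))]
    congr 1
    funext ω
    simp only [hg]
    congr 1
    · have e : 2*π*T*|ω|/T = 2*π*|ω| := by field_simp
      rw [e, abs_mul (2*π), abs_mul (2*π), abs_abs]
    · have e : (2*π*T*|ω|)^2 = 4*π^2*ω^2*T^2 := by
        rw [mul_pow, mul_pow, mul_pow, sq_abs]; ring
      rw [e]
  have h2πT : (0:ℝ) < 2*π*T := by positivity
  have step2 : ∫ u in Ioi (0:ℝ), g (2*π*T*u) = (2*π*T)⁻¹ * ∫ x in Ioi (0:ℝ), g x := by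
    have := integral_comp_mul_left_Ioi g 0 h2πT
    simpa [mul_zero] using this
  have step3 : ∫ x in Ioi (0:ℝ), g x = T^(2*H-1) * (π / (2 * Real.sin (π * H))) := by
    rw [← L2 ⟨h0, h1⟩, ← integral_const_mul]
    refine setIntegral_congr_fun measurableSet_Ioi fun x hx => ?_
    have hx0 : (0:ℝ) < x := hx
    simp only [hg]
    rw [abs_of_pos (div_pos hx0 hT), div_rpow hx0.le hT.le]
    have hTne : T ^ (1-2*H) ≠ 0 := (rpow_pos_of_pos hT _).ne'
    have hE : T ^ (2*H-1) = (T ^ (1-2*H))⁻¹ := by rw [← rpow_neg hT.le]; ring_nf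
    rw [hE]
    field_simp
  rw [step1, step2, step3]
  have hTpow : T^2 * ((2*π*T)⁻¹ * (T^(2*H-1) * (π / (2 * Real.sin (π * H)))) * 2)
      = T^(2*H) / (2 * Real.sin (π * H)) := by
    have e : T^2 * T^(2*H-1) * T⁻¹ = T^(2*H) := by
      rw [← rpow_natCast T 2, ← rpow_neg_one T, ← rpow_add hT, ← rpow_add hT]
      norm_num
      congr 1
      ring
    rw [← e]
    have hπ := Real.pi_ne_zero
    field_simp
  linear_combination (Real.Gamma (H + 1/2))^2 * hTpow
end Aux
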